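/- Let 0 < q ≤ v < ∞ and α, β > -1 with (α+1)/q = (β+1)/v, and let h : (0,∞) → [0,∞) be decreasing with I := ∫_0^∞ h(σ)^q dμ_α(σ) < ∞. Then there is a constant C = C(q,v,α,β) such that ∫_0^∞ h(σ)^v dμ_β(σ) ≤ C · I^{v/q}. -/

import Mathlib

open MeasureTheory
open scoped ENNReal

/-- Quantitative embedding in the equality case: for `0 < q ≤ v < ∞`, `α, β > -1` with
`(α+1)/q = (β+1)/v`, there is `C = C(q,v,α,β) > 0` such that for every decreasing
`h : (0,∞) → [0,∞)` with `I := ∫_0^∞ h(σ)^q dμ_α(σ) < ∞`,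
`∫_0^∞ h(σ)^v dμ_β(σ) ≤ C · I^{v/q}`. -/
theorem embedding_equal_quantitative (q v α β : ℝ) (hq : 0 < q) (hqv : q ≤ v)
    (hα : -1 < α) (hβ : -1 < β) (heq : (α + 1) / q = (β + 1) / v) :
    ∃ C : ℝ, 0 < C ∧ ∀ h : ℝ → ℝ, AntitoneOn h (Set.Ioi 0) → (∀ σ, 0 ≤ h σ) →
      (∫⁻ σ in Set.Ioi (0 : ℝ),
          ENNReal.ofReal (h σ ^ q *
            ((2 ^ (α + 1) / Real.Gamma (α + 1)) * σ ^ α * Real.exp (-2 * σ)))) < ⊤ →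
      (∫⁻ σ in Set.Ioi (0 : ℝ),
          ENNReal.ofReal (h σ ^ v *
            ((2 ^ (β + 1) / Real.Gamma (β + 1)) * σ ^ β * Real.exp (-2 * σ)))) ≤
        ENNReal.ofReal C *
          (∫⁻ σ in Set.Ioi (0 : ℝ),
            ENNReal.ofReal (h σ ^ q *
              ((2 ^ (α + 1) / Real.Gamma (α + 1)) * σ ^ α * Real.exp (-2 * σ)))) ^ (v / q) := by
  have hv : 0 < v := hq.trans_le hqv
  have hcross : (α + 1) * v = (β + 1) * q := (div_eq_div_iff hq.ne' hv.ne').1 heq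
  set r : ℝ := (v - q) / q with hr_def
  have hr : 0 ≤ r := div_nonneg (by linarith) hq.le
  set κ : ℝ := 1 / (2 * (r + 1)) with hκ_def
  have hκpos : 0 < κ := by rw [hκ_def]; positivity
  have hκ1 : κ ≤ 1 := by
    rw [hκ_def, div_le_one (by positivity)]; linarith
  have hκr : κ * r ≤ 1 / 2 := by
    rw [hκ_def, div_mul_eq_mul_div, one_mul, div_le_div_iff₀ (by positivity) (by norm_num)]
    linarith
  have hΓα : 0 < Real.Gamma (α + 1) := Real.Gamma_pos_of_pos (by linarith)
  have hΓβ : 0 < Real.Gamma (β + 1) := Real.Gamma_pos_of_pos (by linarith)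
  set cα : ℝ := 2 ^ (α + 1) / Real.Gamma (α + 1) with hcα_def
  set cβ : ℝ := 2 ^ (β + 1) / Real.Gamma (β + 1) with hcβ_def
  have hcα : 0 < cα := div_pos (Real.rpow_pos_of_pos two_pos _) hΓα
  have hcβ : 0 < cβ := div_pos (Real.rpow_pos_of_pos two_pos _) hΓβ
  set m : ℝ := min 1 ((2:ℝ) ^ (-α)) with hm_def
  have hm : 0 < m := lt_min one_pos (Real.rpow_pos_of_pos two_pos _)
  set B : ℝ := 2 / (cα * m) with hB_def
  have hB : 0 < B := by rw [hB_def]; positivity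
  set K : ℝ := B ^ r * κ ^ (-((α + 1) * r)) with hK_def
  have hK : 0 < K := mul_pos (Real.rpow_pos_of_pos hB _) (Real.rpow_pos_of_pos hκpos _)
  refine ⟨cβ * K / cα * 2 ^ (α + 1),
    mul_pos (div_pos (mul_pos hcβ hK) hcα) (Real.rpow_pos_of_pos two_pos _),
    fun h hanti hpos hfin => ?_⟩
  set I : ℝ≥0∞ := ∫⁻ σ in Set.Ioi (0:ℝ),
      ENNReal.ofReal (h σ ^ q * (cα * σ ^ α * Real.exp (-2 * σ))) with hI_def
  set Ir : ℝ := I.toReal with hIr_def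
  have hIr : ENNReal.ofReal Ir = I := ENNReal.ofReal_toReal hfin.ne
  have hIrnn : (0:ℝ) ≤ Ir := ENNReal.toReal_nonneg
  -- growth lemma
  have grow : ∀ σ : ℝ, 0 < σ →
      h σ ^ q * (cα * (m * (κ*σ) ^ α) * Real.exp (-2 * (κ*σ))) * (κ*σ/2) ≤ Ir := by
    intro σ hσ
    set s : ℝ := κ * σ with hs_def
    have hs : 0 < s := mul_pos hκpos hσ
    have hsσ : s ≤ σ := by
      rw [hs_def]; nlinarith
    have hsub : Set.Ioo (s/2) s ⊆ Set.Ioi (0:ℝ) := fun t ht => lt_trans (by positivity) ht.1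
    have step1 : (∫⁻ _ in Set.Ioo (s/2) s,
        ENNReal.ofReal (h σ ^ q * (cα * (m * s ^ α) * Real.exp (-2 * s)))) ≤ I := by
      calc (∫⁻ _ in Set.Ioo (s/2) s,
            ENNReal.ofReal (h σ ^ q * (cα * (m * s ^ α) * Real.exp (-2 * s))))
          ≤ ∫⁻ t in Set.Ioo (s/2) s,
            ENNReal.ofReal (h t ^ q * (cα * t ^ α * Real.exp (-2 * t))) := by
            refine lintegral_mono_ae ?_
            filter_upwards [ae_restrict_mem measurableSet_Ioo] with t ht
            have ht0 : 0 < t := lt_trans (by positivity) ht.1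
            have hts : t ≤ s := ht.2.le
            refine ENNReal.ofReal_le_ofReal ?_
            have h1 : h σ ^ q ≤ h t ^ q :=
              Real.rpow_le_rpow (hpos σ)
                (hanti (Set.mem_Ioi.2 ht0) (Set.mem_Ioi.2 hσ) (hts.trans hsσ)) hq.le
            have h2 : m * s ^ α ≤ t ^ α := by
              rcases le_or_gt 0 α with hα0 | hα0
              · have e1 : (s/2) ^ α ≤ t ^ α :=
                  Real.rpow_le_rpow (by positivity) ht.1.le hα0
                have e2 : (s/2) ^ α = 2 ^ (-α) * s ^ α := by
                  rw [Real.div_rpow hs.le (by norm_num : (0:ℝ) ≤ 2),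
                    Real.rpow_neg (by norm_num : (0:ℝ) ≤ 2)]
                  ring
                calc m * s ^ α ≤ 2 ^ (-α) * s ^ α :=
                      mul_le_mul_of_nonneg_right (min_le_right _ _) (Real.rpow_nonneg hs.le _)
                  _ = (s/2) ^ α := e2.symm
                  _ ≤ t ^ α := e1
              · have e1 : s ^ α ≤ t ^ α :=
                  Real.rpow_le_rpow_of_nonpos ht0 hts hα0.le
                calc m * s ^ α ≤ 1 * s ^ α :=
                      mul_le_mul_of_nonneg_right (min_le_left _ _) (Real.rpow_nonneg hs.le _)
                  _ = s ^ α := one_mul _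
                  _ ≤ t ^ α := e1
            have h3 : Real.exp (-2 * s) ≤ Real.exp (-2 * t) :=
              Real.exp_le_exp.2 (by linarith)
            have hq0 : 0 ≤ h t ^ q := Real.rpow_nonneg (hpos t) q
            have hsα : 0 ≤ m * s ^ α := by positivity
            have hexp : 0 ≤ Real.exp (-2 * s) := (Real.exp_pos _).le
            calc h σ ^ q * (cα * (m * s ^ α) * Real.exp (-2 * s))
                ≤ h t ^ q * (cα * (m * s ^ α) * Real.exp (-2 * s)) := by
                  apply mul_le_mul_of_nonneg_right h1; positivity
              _ ≤ h t ^ q * (cα * t ^ α * Real.exp (-2 * t)) := by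
                  apply mul_le_mul_of_nonneg_left _ hq0
                  apply mul_le_mul _ h3 hexp (by positivity)
                  exact mul_le_mul_of_nonneg_left h2 hcα.le
        _ ≤ I := by
            rw [hI_def]
            exact lintegral_mono_set hsub
    rw [setLIntegral_const, Real.volume_Ioo] at step1
    have hnn : 0 ≤ h σ ^ q * (cα * (m * s ^ α) * Real.exp (-2 * s)) := by
      have := Real.rpow_nonneg (hpos σ) q; positivity
    have step2 : ENNReal.ofReal (h σ ^ q * (cα * (m * s ^ α) * Real.exp (-2 * s)) * (s/2))
        ≤ ENNReal.ofReal Ir := by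
      rw [ENNReal.ofReal_mul hnn, hIr]
      calc ENNReal.ofReal (h σ ^ q * (cα * (m * s ^ α) * Real.exp (-2 * s))) *
            ENNReal.ofReal (s/2)
          = ENNReal.ofReal (h σ ^ q * (cα * (m * s ^ α) * Real.exp (-2 * s))) *
            ENNReal.ofReal (s - s/2) := by norm_num [sub_div]; ring_nf
        _ ≤ I := step1
    exact (ENNReal.ofReal_le_ofReal_iff ENNReal.toReal_nonneg).1 step2
  -- upper bound on h σ ^ q
  have hub : ∀ σ : ℝ, 0 < σ →
      h σ ^ q ≤ Ir * (B * ((κ*σ) ^ (-(α+1)) * Real.exp (2 * (κ*σ)))) := by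
    intro σ hσ
    set s : ℝ := κ * σ with hs_def
    have hs : 0 < s := mul_pos hκpos hσ
    have hg := grow σ hσ
    have hp : 0 < cα * (m * s ^ α) * Real.exp (-2 * s) * (s/2) := by positivity
    rw [mul_assoc, ← le_div_iff₀ hp] at hg
    calc h σ ^ q ≤ Ir / (cα * (m * s ^ α) * Real.exp (-2 * s) * (s/2)) := hg
      _ = Ir * (B * (s ^ (-(α+1)) * Real.exp (2 * s))) := by
          rw [Real.rpow_neg hs.le, Real.rpow_add_one hs.ne', hB_def]
          rw [show (-2 : ℝ) * s = -(2*s) by ring, Real.exp_neg]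
          have h1 : s ^ α ≠ 0 := (Real.rpow_pos_of_pos hs _).ne'
          have h2 : Real.exp (2*s) ≠ 0 := Real.exp_ne_zero _
          field_simp
  -- key pointwise bound
  have key : ∀ σ : ℝ, 0 < σ →
      h σ ^ v * (cβ * σ ^ β * Real.exp (-2 * σ)) ≤
      (cβ * K / cα * Ir ^ r) * (h σ ^ q * (cα * σ ^ α * Real.exp (-σ))) := by
    intro σ hσ
    rcases eq_or_lt_of_le (hpos σ) with h0 | h0
    · rw [← h0, Real.zero_rpow hv.ne', Real.zero_rpow hq.ne']
      simp
    · set s : ℝ := κ * σ with hs_def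
      have hs : 0 < s := mul_pos hκpos hσ
      have e1 : h σ ^ v = h σ ^ q * (h σ ^ q) ^ r := by
        rw [← Real.rpow_mul (hpos σ), ← Real.rpow_add h0]
        congr 1
        rw [hr_def]
        field_simp
        ring
      have e_eq : -((α+1)*r) + β = α := by
        rw [hr_def]
        field_simp
        linear_combination -hcross
      have e2 : h σ ^ v ≤ h σ ^ q * (Ir * (B * (s ^ (-(α+1)) * Real.exp (2 * s)))) ^ r := by
        rw [e1]
        exact mul_le_mul_of_nonneg_left
          (Real.rpow_le_rpow (Real.rpow_nonneg (hpos σ) q) (hub σ hσ) hr)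
          (Real.rpow_nonneg (hpos σ) q)
      have e3 : (Ir * (B * (s ^ (-(α+1)) * Real.exp (2 * s)))) ^ r
          = Ir ^ r * (B ^ r * ((κ ^ (-((α+1)*r)) * σ ^ (-((α+1)*r))) * Real.exp (2*s*r))) := by
        rw [Real.mul_rpow ENNReal.toReal_nonneg (by positivity),
            Real.mul_rpow hB.le (by positivity),
            Real.mul_rpow (Real.rpow_nonneg hs.le _) (Real.exp_pos _).le,
            ← Real.rpow_mul hs.le, ← Real.exp_mul, neg_mul, hs_def,
            Real.mul_rpow hκpos.le hσ.le]
      have hβnn : (0:ℝ) ≤ cβ * σ ^ β * Real.exp (-2 * σ) :=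
        mul_nonneg (mul_nonneg hcβ.le (Real.rpow_nonneg hσ.le _)) (Real.exp_pos _).le
      have hqnn : (0:ℝ) ≤ h σ ^ q := Real.rpow_nonneg (hpos σ) q
      calc h σ ^ v * (cβ * σ ^ β * Real.exp (-2 * σ))
          ≤ (h σ ^ q * (Ir ^ r * (B ^ r * ((κ ^ (-((α+1)*r)) * σ ^ (-((α+1)*r))) *
              Real.exp (2*s*r))))) * (cβ * σ ^ β * Real.exp (-2 * σ)) :=
            mul_le_mul_of_nonneg_right (e2.trans_eq (by rw [e3])) hβnn
        _ = (cβ * K * Ir ^ r) * (h σ ^ q * ((σ ^ (-((α+1)*r)) * σ ^ β) *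
              (Real.exp (2*s*r) * Real.exp (-2 * σ)))) := by
            rw [hK_def]; ring
        _ = (cβ * K * Ir ^ r) * (h σ ^ q * (σ ^ α * Real.exp (2*s*r + -2 * σ))) := by
            rw [← Real.rpow_add hσ, ← Real.exp_add, e_eq]
        _ ≤ (cβ * K * Ir ^ r) * (h σ ^ q * (σ ^ α * Real.exp (-σ))) := by
            have hexp : Real.exp (2*s*r + -2 * σ) ≤ Real.exp (-σ) := by
              refine Real.exp_le_exp.2 ?_
              have hp : κ * r * σ ≤ 1/2 * σ := mul_le_mul_of_nonneg_right hκr hσ.le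
              rw [hs_def]
              ring_nf
              ring_nf at hp
              linarith
            have h1 : σ ^ α * Real.exp (2*s*r + -2 * σ) ≤ σ ^ α * Real.exp (-σ) :=
              mul_le_mul_of_nonneg_left hexp (Real.rpow_nonneg hσ.le α)
            have h2 := mul_le_mul_of_nonneg_left h1 hqnn
            exact mul_le_mul_of_nonneg_left h2
              (mul_nonneg (mul_nonneg hcβ.le hK.le) (Real.rpow_nonneg hIrnn r))
        _ = (cβ * K / cα * Ir ^ r) * (h σ ^ q * (cα * σ ^ α * Real.exp (-σ))) := by
            field_simp
  -- substitution lemma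
  have hC0 : (0:ℝ) ≤ cβ * K / cα * Ir ^ r :=
    mul_nonneg (div_nonneg (mul_nonneg hcβ.le hK.le) hcα.le) (Real.rpow_nonneg hIrnn r)
  have hmap : ∀ G : ℝ → ℝ≥0∞, (∫⁻ x, G x) = 2 * ∫⁻ x, G (2*x) := by
    intro G
    have h1 : (∫⁻ x, G x ∂(Measure.map (fun x => (2:ℝ) * x) volume)) = ∫⁻ x, G (2*x) := by
      simpa using lintegral_map_equiv (μ := volume) G
        ((Homeomorph.mulLeft₀ (2:ℝ) two_ne_zero).toMeasurableEquiv)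
    rw [Real.map_volume_mul_left (two_ne_zero), lintegral_smul_measure] at h1
    have h2 : (2:ℝ≥0∞) * ENNReal.ofReal |(2:ℝ)⁻¹| = 1 := by
      rw [abs_of_pos (by norm_num), ENNReal.ofReal_inv_of_pos two_pos]
      norm_num [ENNReal.mul_inv_cancel]
    rw [← h1, smul_eq_mul, ← mul_assoc, h2, one_mul]
  have subst : (∫⁻ σ in Set.Ioi (0:ℝ),
      ENNReal.ofReal (h σ ^ q * (cα * σ ^ α * Real.exp (-σ))))
      ≤ ENNReal.ofReal (2 ^ (α+1)) * I := by
    have hcomp : ∀ x : ℝ, (Set.Ioi (0:ℝ)).indicator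
          (fun σ => ENNReal.ofReal (h σ ^ q * (cα * σ ^ α * Real.exp (-σ)))) (2*x)
        = (Set.Ioi (0:ℝ)).indicator
          (fun y => ENNReal.ofReal (h (2*y) ^ q * (cα * (2*y) ^ α * Real.exp (-(2*y))))) x := by
      intro x
      by_cases hx : x ∈ Set.Ioi (0:ℝ)
      · rw [Set.indicator_of_mem hx,
          Set.indicator_of_mem (Set.mem_Ioi.2 (by have := Set.mem_Ioi.1 hx; linarith))]
      · rw [Set.indicator_of_notMem hx, Set.indicator_of_notMem]
        intro hc
        exact hx (Set.mem_Ioi.2 (by have := Set.mem_Ioi.1 hc; linarith))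
    have h1 : (∫⁻ σ in Set.Ioi (0:ℝ),
        ENNReal.ofReal (h σ ^ q * (cα * σ ^ α * Real.exp (-σ))))
        = 2 * ∫⁻ x in Set.Ioi (0:ℝ),
            ENNReal.ofReal (h (2*x) ^ q * (cα * (2*x) ^ α * Real.exp (-(2*x)))) := by
      rw [← lintegral_indicator measurableSet_Ioi, hmap]
      congr 1
      rw [← lintegral_indicator measurableSet_Ioi]
      exact lintegral_congr hcomp
    have h2 : (∫⁻ x in Set.Ioi (0:ℝ),
        ENNReal.ofReal (h (2*x) ^ q * (cα * (2*x) ^ α * Real.exp (-(2*x)))))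
        ≤ ENNReal.ofReal (2 ^ α) * I := by
      calc (∫⁻ x in Set.Ioi (0:ℝ),
          ENNReal.ofReal (h (2*x) ^ q * (cα * (2*x) ^ α * Real.exp (-(2*x)))))
          ≤ ∫⁻ x in Set.Ioi (0:ℝ), ENNReal.ofReal (2 ^ α) *
              ENNReal.ofReal (h x ^ q * (cα * x ^ α * Real.exp (-2 * x))) := by
            refine lintegral_mono_ae ?_
            filter_upwards [ae_restrict_mem measurableSet_Ioi] with x hx
            have hx0 : (0:ℝ) < x := hx
            rw [← ENNReal.ofReal_mul (Real.rpow_nonneg (by norm_num : (0:ℝ) ≤ 2) α)]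
            refine ENNReal.ofReal_le_ofReal ?_
            have hh : h (2*x) ≤ h x :=
              hanti (Set.mem_Ioi.2 hx0) (Set.mem_Ioi.2 (by linarith)) (by linarith)
            have hhq : h (2*x) ^ q ≤ h x ^ q := Real.rpow_le_rpow (hpos _) hh hq.le
            have h2x : ((2:ℝ)*x) ^ α = 2 ^ α * x ^ α :=
              Real.mul_rpow (by norm_num) hx0.le
            calc h (2*x) ^ q * (cα * (2*x) ^ α * Real.exp (-(2*x)))
                ≤ h x ^ q * (cα * (2*x) ^ α * Real.exp (-(2*x))) := by
                  refine mul_le_mul_of_nonneg_right hhq ?_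
                  have : (0:ℝ) ≤ (2*x) ^ α := Real.rpow_nonneg (by linarith) α
                  positivity
              _ = 2 ^ α * (h x ^ q * (cα * x ^ α * Real.exp (-2 * x))) := by
                  rw [h2x, show -(2*x) = -2 * x by ring]
                  ring
        _ = ENNReal.ofReal (2 ^ α) * I := by
            rw [lintegral_const_mul' _ _ ENNReal.ofReal_ne_top, hI_def]
    calc (∫⁻ σ in Set.Ioi (0:ℝ),
        ENNReal.ofReal (h σ ^ q * (cα * σ ^ α * Real.exp (-σ))))
        = 2 * ∫⁻ x in Set.Ioi (0:ℝ),
            ENNReal.ofReal (h (2*x) ^ q * (cα * (2*x) ^ α * Real.exp (-(2*x)))) := h1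
      _ ≤ 2 * (ENNReal.ofReal (2 ^ α) * I) := mul_le_mul_right h2 2
      _ = ENNReal.ofReal (2 ^ (α+1)) * I := by
          rw [← mul_assoc]
          congr 1
          rw [show (2:ℝ≥0∞) = ENNReal.ofReal 2 from (ENNReal.ofReal_ofNat 2).symm,
            ← ENNReal.ofReal_mul (by norm_num), Real.rpow_add_one (by norm_num : (2:ℝ) ≠ 0)]
          rw [mul_comm]
  -- final assembly
  have hvq : r + 1 = v / q := by
    rw [hr_def]
    field_simp
    ring
  have hIrr : Ir ^ r * Ir = Ir ^ (v/q) := by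
    rcases eq_or_lt_of_le (ENNReal.toReal_nonneg : (0:ℝ) ≤ I.toReal) with h0 | h0
    · rw [hIr_def, ← h0, mul_zero, Real.zero_rpow (div_pos hv hq).ne']
    · rw [← hvq, Real.rpow_add_one h0.ne' r]
  calc (∫⁻ σ in Set.Ioi (0:ℝ),
      ENNReal.ofReal (h σ ^ v * (cβ * σ ^ β * Real.exp (-2 * σ))))
      ≤ ∫⁻ σ in Set.Ioi (0:ℝ), ENNReal.ofReal (cβ * K / cα * Ir ^ r) *
          ENNReal.ofReal (h σ ^ q * (cα * σ ^ α * Real.exp (-σ))) := by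
        refine lintegral_mono_ae ?_
        filter_upwards [ae_restrict_mem measurableSet_Ioi] with σ hσ
        rw [← ENNReal.ofReal_mul hC0]
        exact ENNReal.ofReal_le_ofReal (key σ hσ)
    _ = ENNReal.ofReal (cβ * K / cα * Ir ^ r) *
        ∫⁻ σ in Set.Ioi (0:ℝ), ENNReal.ofReal (h σ ^ q * (cα * σ ^ α * Real.exp (-σ))) :=
          lintegral_const_mul' _ _ ENNReal.ofReal_ne_top
    _ ≤ ENNReal.ofReal (cβ * K / cα * Ir ^ r) * (ENNReal.ofReal (2 ^ (α+1)) * I) :=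
          mul_le_mul_right subst _
    _ = ENNReal.ofReal (cβ * K / cα * 2 ^ (α + 1)) * I ^ (v / q) := by
        have h2nn : (0:ℝ) ≤ 2 ^ (α+1) := Real.rpow_nonneg (by norm_num) _
        have hc1 : (0:ℝ) ≤ cβ * K / cα * Ir ^ r * 2 ^ (α+1) := mul_nonneg hC0 h2nn
        have hc2 : (0:ℝ) ≤ cβ * K / cα * 2 ^ (α + 1) :=
          mul_nonneg (div_nonneg (mul_nonneg hcβ.le hK.le) hcα.le) h2nn
        rw [← hIr, ← mul_assoc, ← ENNReal.ofReal_mul hC0,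
          ← ENNReal.ofReal_mul hc1,
          ENNReal.ofReal_rpow_of_nonneg ENNReal.toReal_nonneg
            (le_of_lt (div_pos hv hq)),
          ← ENNReal.ofReal_mul hc2]
        congr 1
        rw [← hIrr]
        ring
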